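/- Let a ∈ GL_n(ℂ) be non-diagonalizable, with Jordan form containing a block of size ≥ 2 and eigenvalue λ ≠ 0, conjugated by b so that ba b⁻¹ is in Jordan form with first block of size m ≥ 2. Define h'(g,g') = (g_{12} g'_{22})/(g'_{12} g_{22}) (entries indexed from 1) and h(g,g') = h'(b g b⁻¹, b g' b⁻¹). Then h(a^i, a^j) = i/j for all integers i, j ≥ 1. -/

import Mathlib

open Matrix

/-- Suppose `b a b⁻¹` is in Jordan form whose first block has size `m ≥ 2` and eigenvalue
`λ ≠ 0`.  With `h'(g,g') = (g₁₂ g'₂₂)/(g'₁₂ g₂₂)` (entries indexed from 1, i.e. `(0,1)` and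
`(1,1)` indexed from 0) and `h(g,g') = h'(b g b⁻¹, b g' b⁻¹)`, we have `h(a^i, a^j) = i/j`
for all `i, j ≥ 1`. -/
theorem rational_function_on_powers {n m : ℕ} (hm : 2 ≤ m) (hmn : m ≤ n)
    (a b : GL (Fin n) ℂ) (lam : ℂ) (hlam : lam ≠ 0)
    (hblock : ∀ i j : Fin n, (i : ℕ) < m → (j : ℕ) < m →
      ((b * a * b⁻¹ : GL (Fin n) ℂ) : Matrix (Fin n) (Fin n) ℂ) i j =
        if (j : ℕ) = (i : ℕ) then lam else if (j : ℕ) = (i : ℕ) + 1 then 1 else 0)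
    (hoff : ∀ i j : Fin n,
      (((i : ℕ) < m ∧ m ≤ (j : ℕ)) ∨ (m ≤ (i : ℕ) ∧ (j : ℕ) < m)) →
      ((b * a * b⁻¹ : GL (Fin n) ℂ) : Matrix (Fin n) (Fin n) ℂ) i j = 0) :
    ∀ i j : ℕ, 1 ≤ i → 1 ≤ j →
      (((b * a ^ i * b⁻¹ : GL (Fin n) ℂ) : Matrix (Fin n) (Fin n) ℂ)
          ⟨0, by omega⟩ ⟨1, by omega⟩ *
        ((b * a ^ j * b⁻¹ : GL (Fin n) ℂ) : Matrix (Fin n) (Fin n) ℂ)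
          ⟨1, by omega⟩ ⟨1, by omega⟩) /
      (((b * a ^ j * b⁻¹ : GL (Fin n) ℂ) : Matrix (Fin n) (Fin n) ℂ)
          ⟨0, by omega⟩ ⟨1, by omega⟩ *
        ((b * a ^ i * b⁻¹ : GL (Fin n) ℂ) : Matrix (Fin n) (Fin n) ℂ)
          ⟨1, by omega⟩ ⟨1, by omega⟩) = (i : ℂ) / (j : ℂ) := by
  have hn : 2 ≤ n := le_trans hm hmn
  set J : Matrix (Fin n) (Fin n) ℂ :=
    ((b * a * b⁻¹ : GL (Fin n) ℂ) : Matrix (Fin n) (Fin n) ℂ) with hJ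
  set i0 : Fin n := ⟨0, by omega⟩ with hi0def
  set i1 : Fin n := ⟨1, by omega⟩ with hi1def
  have e0 : (i0 : ℕ) = 0 := rfl
  have e1 : (i1 : ℕ) = 1 := rfl
  have hcoe : ∀ k : ℕ,
      ((b * a ^ k * b⁻¹ : GL (Fin n) ℂ) : Matrix (Fin n) (Fin n) ℂ) = J ^ k := by
    intro k
    rw [hJ, ← conj_pow, Units.val_pow_eq_pow_val]
  -- column values of J
  have hJ01 : J i0 i1 = 1 := by
    rw [hblock i0 i1 (by omega) (by omega)]; simp [i0, i1]
  have hJ00 : J i0 i0 = lam := by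
    rw [hblock i0 i0 (by omega) (by omega)]; simp
  have hJ10 : J i1 i0 = 0 := by
    rw [hblock i1 i0 (by omega) (by omega)]; simp [i0, i1]
  have hJ11 : J i1 i1 = lam := by
    rw [hblock i1 i1 (by omega) (by omega)]; simp
  have hcol0 : ∀ l : Fin n, l ≠ i0 → J l i0 = 0 := by
    intro l hl
    by_cases hlm : (l : ℕ) < m
    · rw [hblock l i0 hlm (by omega)]
      have : (l : ℕ) ≠ 0 := fun h => hl (Fin.ext h)
      simp only [i0]
      rw [if_neg (by omega), if_neg (by omega)]
    · exact hoff l i0 (Or.inr ⟨by omega, by omega⟩)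
  have hcol1 : ∀ l : Fin n, l ≠ i0 → l ≠ i1 → J l i1 = 0 := by
    intro l hl0 hl1
    by_cases hlm : (l : ℕ) < m
    · rw [hblock l i1 hlm (by omega)]
      have h0 : (l : ℕ) ≠ 0 := fun h => hl0 (Fin.ext h)
      have h1 : (l : ℕ) ≠ 1 := fun h => hl1 (Fin.ext h)
      simp only [i1]
      rw [if_neg (by omega), if_neg (by omega)]
    · exact hoff l i1 (Or.inr ⟨by omega, by omega⟩)
  have hne : i0 ≠ i1 := by simp [i0, i1, Fin.ext_iff]
  -- main induction
  have key : ∀ k : ℕ, (J ^ k) i0 i0 = lam ^ k ∧ (J ^ k) i0 i1 = k * lam ^ (k - 1) ∧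
      (J ^ k) i1 i0 = 0 ∧ (J ^ k) i1 i1 = lam ^ k := by
    intro k
    induction k with
    | zero => simp [Matrix.one_apply, hne, hne.symm]
    | succ k ih =>
      obtain ⟨h00, h01, h10, h11⟩ := ih
      have sum0 : ∀ r : Fin n, (J ^ (k + 1)) r i0 = (J ^ k) r i0 * lam := by
        intro r
        rw [pow_succ, Matrix.mul_apply]
        rw [← Finset.add_sum_erase _ _ (Finset.mem_univ i0), hJ00]
        rw [Finset.sum_eq_zero, add_zero]
        intro l hl
        rw [hcol0 l (Finset.ne_of_mem_erase hl), mul_zero]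
      have sum1 : ∀ r : Fin n,
          (J ^ (k + 1)) r i1 = (J ^ k) r i0 + (J ^ k) r i1 * lam := by
        intro r
        rw [pow_succ, Matrix.mul_apply]
        rw [← Finset.add_sum_erase _ _ (Finset.mem_univ i0), hJ01,
          ← Finset.add_sum_erase _ _
            (Finset.mem_erase.mpr ⟨hne.symm, Finset.mem_univ i1⟩), hJ11]
        rw [Finset.sum_eq_zero, add_zero, mul_one]
        intro l hl
        have hl1 : l ≠ i1 := (Finset.mem_erase.mp hl).1
        have hl0 : l ≠ i0 := (Finset.mem_erase.mp (Finset.mem_erase.mp hl).2).1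
        rw [hcol1 l hl0 hl1, mul_zero]
      refine ⟨?_, ?_, ?_, ?_⟩
      · rw [sum0, h00, ← pow_succ]
      · rw [sum1, h00, h01]
        have : (k : ℂ) * lam ^ (k - 1) * lam = k * lam ^ k := by
          cases k with
          | zero => simp
          | succ k => rw [Nat.succ_sub_one, mul_assoc, ← pow_succ]
        rw [this]
        push_cast
        ring
      · rw [sum0, h10, zero_mul]
      · rw [sum1, h10, h11, zero_add, ← pow_succ]
  intro i j hi hj
  obtain ⟨hi00, hi01, hi10, hi11⟩ := key i
  obtain ⟨hj00, hj01, hj10, hj11⟩ := key j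
  rw [hcoe i, hcoe j]
  show (J ^ i) i0 i1 * (J ^ j) i1 i1 / ((J ^ j) i0 i1 * (J ^ i) i1 i1) = _
  rw [hi01, hj11, hj01, hi11]
  have hji : (j : ℂ) ≠ 0 := Nat.cast_ne_zero.mpr (by omega)
  have hpi : lam ^ (i - 1) ≠ 0 := pow_ne_zero _ hlam
  have hpj : lam ^ (j - 1) ≠ 0 := pow_ne_zero _ hlam
  have hli : lam ^ i = lam ^ (i - 1) * lam := by
    cases i with
    | zero => omega
    | succ i => rw [Nat.succ_sub_one, pow_succ]
  have hlj : lam ^ j = lam ^ (j - 1) * lam := by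
    cases j with
    | zero => omega
    | succ j => rw [Nat.succ_sub_one, pow_succ]
  rw [hli, hlj]
  field_simp
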